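/- (Theorem 3.6(a), Euclidean case.) Let p̄ ∈ F, let each ψ_u (u = 1,…,t) be directionally differentiable at p̄, and assume ψ_u is strictly pseudo-convex at p̄ for every active index u ∈ J(p̄). Suppose there exists an index c ∈ {1,…,l} such that the interval-valued objective φ_c, defined on the nonempty open convex set E, is weakly directionally differentiable at p̄ and LU-pseudo-convex at p̄, and that for every feasible point p ∈ F there exist scalars μ_u^L ≥ 0, μ_u^U ≥ 0 (u = 1,…,t), possibly depending on p, such that: (i) (φ_c^L)'(p̄; p − p̄) + Σ_{u=1}^t μ_u^L ψ_u'(p̄; p − p̄) ≥ 0; (ii) (φ_c^U)'(p̄; p − p̄) + Σ_{u=1}^t μ_u^U ψ_u'(p̄; p − p̄) ≥ 0; and (iii) μ_u^L ψ_u(p̄) = 0 = μ_u^U ψ_u(p̄) for all u. Then p̄ is a weakly type-I Pareto optimal solution of (MIVOP2). -/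
import Mathlib


/-- One-sided directional derivative of `f` at `p` in direction `w`, with value `d`. -/
def HasDirDeriv {V : Type*} [NormedAddCommGroup V] [NormedSpace ℝ V]
    (f : V → ℝ) (p w : V) (d : ℝ) : Prop :=
  Filter.Tendsto (fun α : ℝ => (f (p + α • w) - f p) / α)
    (nhdsWithin 0 (Set.Ioi 0)) (nhds d)

/-- `f` is convex at the point `p` (relative to the convex set `E`). -/
def ConvexAtPt {V : Type*} [NormedAddCommGroup V] [NormedSpace ℝ V]
    (E : Set V) (f : V → ℝ) (p : V) : Prop :=
  ∀ q ∈ E, ∀ α : ℝ, 0 ≤ α → α ≤ 1 →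
    f ((1 - α) • p + α • q) ≤ (1 - α) * f p + α * f q

/-- `f` (with directional-derivative function `f'` at `pbar`) is pseudo-convex at `pbar`. -/
def PseudoConvexAt {V : Type*} [NormedAddCommGroup V] [NormedSpace ℝ V]
    (E : Set V) (f : V → ℝ) (f' : V → ℝ) (pbar : V) : Prop :=
  ∀ p ∈ E, f p < f pbar → f' (p - pbar) < 0

/-- `f` (with directional-derivative function `f'` at `pbar`) is strictly
pseudo-convex at `pbar`. -/
def StrictPseudoConvexAt {V : Type*} [NormedAddCommGroup V] [NormedSpace ℝ V]
    (E : Set V) (f : V → ℝ) (f' : V → ℝ) (pbar : V) : Prop :=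
  ∀ p ∈ E, p ≠ pbar → f p ≤ f pbar → f' (p - pbar) < 0

/-- `[aL, aU] ≤_LU [bL, bU]`. -/
def LUle (aL aU bL bU : ℝ) : Prop := aL ≤ bL ∧ aU ≤ bU

/-- `[aL, aU] <_LU [bL, bU]`. -/
def LUlt (aL aU bL bU : ℝ) : Prop := LUle aL aU bL bU ∧ (aL ≠ bL ∨ aU ≠ bU)

/-- `[aL, aU] ≤_CW [bL, bU]`. -/
def CWle (aL aU bL bU : ℝ) : Prop :=
  (aL + aU) / 2 ≤ (bL + bU) / 2 ∧ (aU - aL) / 2 ≤ (bU - bL) / 2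

/-- `[aL, aU] <_CW [bL, bU]`. -/
def CWlt (aL aU bL bU : ℝ) : Prop := CWle aL aU bL bU ∧ (aL ≠ bL ∨ aU ≠ bU)

/-- Theorem 3.6(a), Euclidean case: KKT sufficiency, via a single
LU-pseudo-convex objective `φ_c`, for weakly type-I Pareto optimal solutions. -/
theorem kkt_weak_type_I_LU_pseudoconvex
    {V : Type*} [NormedAddCommGroup V] [NormedSpace ℝ V]
    (E : Set V) (hEne : E.Nonempty) (hEopen : IsOpen E) (hEconv : Convex ℝ E)
    (l t : ℕ) (φL φU : Fin l → V → ℝ) (ψ : Fin t → V → ℝ)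
    (hφint : ∀ s, ∀ x ∈ E, φL s x ≤ φU s x)
    (pbar : V) (hpbarE : pbar ∈ E) (hpbarF : ∀ u, ψ u pbar ≤ 0)
    (ψ' : Fin t → V → ℝ)
    (hψd : ∀ u w, HasDirDeriv (ψ u) pbar w (ψ' u w))
    -- strict pseudo-convexity of the active constraints at `pbar`
    (hψspc : ∀ u, ψ u pbar = 0 → StrictPseudoConvexAt E (ψ u) (ψ' u) pbar)
    (c : Fin l)
    (φcL' φcU' : V → ℝ)
    (hφLd : ∀ w, HasDirDeriv (φL c) pbar w (φcL' w))
    (hφUd : ∀ w, HasDirDeriv (φU c) pbar w (φcU' w))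
    -- LU-pseudo-convexity of `φ_c` at `pbar`
    (hφLpc : PseudoConvexAt E (φL c) φcL' pbar)
    (hφUpc : PseudoConvexAt E (φU c) φcU' pbar)
    -- multipliers, possibly depending on the feasible point `p`
    (hkkt : ∀ p, p ∈ E → (∀ u, ψ u p ≤ 0) →
      ∃ μL μU : Fin t → ℝ,
        (∀ u, 0 ≤ μL u) ∧ (∀ u, 0 ≤ μU u) ∧
        0 ≤ φcL' (p - pbar) + ∑ u, μL u * ψ' u (p - pbar) ∧
        0 ≤ φcU' (p - pbar) + ∑ u, μU u * ψ' u (p - pbar) ∧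
        (∀ u, μL u * ψ u pbar = 0 ∧ μU u * ψ u pbar = 0)) :
    ¬ ∃ phat, (phat ∈ E ∧ ∀ u, ψ u phat ≤ 0) ∧
      (∀ s, LUlt (φL s phat) (φU s phat) (φL s pbar) (φU s pbar)) := by
  rintro ⟨phat, ⟨hphatE, hphatF⟩, hlt⟩
  obtain ⟨⟨hL, hU⟩, hne⟩ := hlt c
  by_cases hpp : phat = pbar
  · subst hpp; rcases hne with h | h <;> exact h rfl
  obtain ⟨μL, μU, hμL, hμU, hkL, hkU, hcomp⟩ := hkkt phat hphatE hphatF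
  have hterm : ∀ (μ : Fin t → ℝ), (∀ u, 0 ≤ μ u) → (∀ u, μ u * ψ u pbar = 0) →
      ∑ u, μ u * ψ' u (phat - pbar) ≤ 0 := by
    intro μ hμ hc
    apply Finset.sum_nonpos
    intro u _
    by_cases ha : ψ u pbar = 0
    · have hd := hψspc u ha phat hphatE hpp (by rw [ha]; exact hphatF u)
      exact mul_nonpos_of_nonneg_of_nonpos (hμ u) hd.le
    · have hz : μ u = 0 := by
        rcases mul_eq_zero.1 (hc u) with h | h
        · exact h
        · exact absurd h ha
      simp [hz]
  rcases hne with h | h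
  · have hd := hφLpc phat hphatE (lt_of_le_of_ne hL h)
    have hs := hterm μL hμL (fun u => (hcomp u).1)
    linarith
  · have hd := hφUpc phat hphatE (lt_of_le_of_ne hU h)
    have hs := hterm μU hμU (fun u => (hcomp u).2)
    linarith
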